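/- Let 𝕋_t be a triod evolving by curvature on [0,T) with fixed endpoints P¹,P²,P³, and fix x₀ ∈ ℝ². With P̃^i_{x₀,𝔱} = (P^i − x₀)/√(2(T−t(𝔱))), t(𝔱) = T − e^{−2𝔱}, and ρ̃(x) = exp(−|x|²/2), for every index i ∈ {1,2,3} and every 𝔱, |∫_𝔱^{+∞} ⟨P̃^i_{x₀,ξ}, τ^i(1,t(ξ))⟩ ρ̃(P̃^i_{x₀,ξ}) dξ| ≤ √(π/2); consequently, for every x₀ ∈ ℝ² with x₀ ≠ P^i for all i, lim_{𝔱→+∞} Σ_{i=1}^3 ∫_𝔱^{+∞} ⟨P̃^i_{x₀,ξ}, τ^i(1,t(ξ))⟩ ρ̃(P̃^i_{x₀,ξ}) dξ = 0, and the bound √(π/2) holds for every x₀. -/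

import Mathlib

noncomputable section

open Set Filter Metric MeasureTheory Real
open scoped Topology ENNReal NNReal

/-- The Euclidean plane. -/
abbrev E2 : Type := EuclideanSpace ℝ (Fin 2)

/-- Counterclockwise rotation by `π/2` centered at the origin. -/
def rot (v : E2) : E2 := (WithLp.equiv 2 (Fin 2 → ℝ)).symm ![-(v 1), v 0]

/-- Spatial derivative `γ_x` of a one-parameter family of curves. -/
def dX (γ : ℝ → ℝ → E2) (x t : ℝ) : E2 := deriv (fun y => γ y t) x

/-- Second spatial derivative `γ_xx`. -/
def dXX (γ : ℝ → ℝ → E2) (x t : ℝ) : E2 := deriv (fun y => dX γ y t) x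

/-- Time derivative `γ_t`. -/
def dT (γ : ℝ → ℝ → E2) (x t : ℝ) : E2 := deriv (fun s => γ x s) t

/-- Unit tangent vector `τ = γ_x/|γ_x|`. -/
def tangent (γ : ℝ → ℝ → E2) (x t : ℝ) : E2 := ‖dX γ x t‖⁻¹ • dX γ x t

/-- Unit normal vector `ν = R τ`. -/
def normal (γ : ℝ → ℝ → E2) (x t : ℝ) : E2 := rot (tangent γ x t)

/-- Curvature `k = ⟨γ_xx, ν⟩/|γ_x|²`. -/
def curv (γ : ℝ → ℝ → E2) (x t : ℝ) : ℝ :=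
  (inner ℝ (dXX γ x t) (normal γ x t) : ℝ) / ‖dX γ x t‖ ^ 2

/-- Tangential velocity `λ = ⟨γ_xx, τ⟩/|γ_x|²`. -/
def tanVel (γ : ℝ → ℝ → E2) (x t : ℝ) : ℝ :=
  (inner ℝ (dXX γ x t) (tangent γ x t) : ℝ) / ‖dX γ x t‖ ^ 2

/-- Arclength derivative `∂_s f = |γ_x|⁻¹ ∂_x f` of a function along the evolving curve. -/
def dS (γ : ℝ → ℝ → E2) (f : ℝ → ℝ → ℝ) (x t : ℝ) : ℝ :=
  ‖dX γ x t‖⁻¹ * deriv (fun y => f y t) x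

/-- A one-parameter family of triods `𝕋_t = ⋃ᵢ γⁱ(·,t)` evolving by curvature in `Ω`
over the set of times `J`, with fixed endpoints `P i ∈ ∂Ω`: the curves are `C²` in space
and `C¹` in time, regular, embedded, meet `∂Ω` exactly at the fixed endpoints, intersect
each other only at the common 3-point where the unit tangents sum to zero
(120-degree condition), and they move with velocity `γ_xx/|γ_x|²`. -/
structure IsTriodFlow (Ω : Set E2) (P : Fin 3 → E2)
    (γ : Fin 3 → ℝ → ℝ → E2) (J : Set ℝ) : Prop where
  smooth_x : ∀ i, ∀ t ∈ J, ContDiffOn ℝ 2 (fun x => γ i x t) (Icc 0 1)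
  smooth_t : ∀ i, ∀ x ∈ Icc (0:ℝ) 1, ContDiffOn ℝ 1 (fun s => γ i x s) J
  regular : ∀ i, ∀ x ∈ Icc (0:ℝ) 1, ∀ t ∈ J, dX (γ i) x t ≠ 0
  maps_to : ∀ i, ∀ x ∈ Icc (0:ℝ) 1, ∀ t ∈ J, γ i x t ∈ closure Ω
  boundary : ∀ i, ∀ x ∈ Icc (0:ℝ) 1, ∀ t ∈ J, (γ i x t ∈ frontier Ω ↔ x = 1)
  endpoint : ∀ i, ∀ t ∈ J, γ i 1 t = P i
  simple : ∀ i, ∀ t ∈ J, InjOn (fun x => γ i x t) (Icc 0 1)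
  pairwise : ∀ i j, i ≠ j → ∀ t ∈ J, ∀ x ∈ Icc (0:ℝ) 1, ∀ y ∈ Icc (0:ℝ) 1,
    γ i x t = γ j y t → x = 0 ∧ y = 0
  junction : ∀ i j, ∀ t ∈ J, γ i 0 t = γ j 0 t
  angle : ∀ t ∈ J, ∑ i : Fin 3, tangent (γ i) 0 t = 0
  motion : ∀ i, ∀ x ∈ Icc (0:ℝ) 1, ∀ t ∈ J,
    dT (γ i) x t = (‖dX (γ i) x t‖ ^ 2)⁻¹ • dXX (γ i) x t

/-- Length of one evolving curve at time `t`. -/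
def curveLength (γ : ℝ → ℝ → E2) (t : ℝ) : ℝ := ∫ x in (0:ℝ)..1, ‖dX γ x t‖

/-- The triod `𝕋_t` as a subset of the plane. -/
def triodSet (γ : Fin 3 → ℝ → ℝ → E2) (t : ℝ) : Set E2 :=
  ⋃ i : Fin 3, (fun x => γ i x t) '' Icc (0:ℝ) 1

/-- The original time `t(𝔱) = T − e^{−2𝔱}` corresponding to the rescaled time `𝔱`. -/
def origTime (T 𝔱 : ℝ) : ℝ := T - Real.exp (-(2 * 𝔱))

/-- Huisken's parabolic rescaling of one curve of the flow around the point `x₀`: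
`F̃_{x₀}(x,𝔱) = (F(x, t(𝔱)) − x₀)/√(2(T−t(𝔱)))`, with `t(𝔱) = T − e^{−2𝔱}`. -/
def rescCurve (γ : ℝ → ℝ → E2) (x₀ : E2) (T : ℝ) : ℝ → ℝ → E2 :=
  fun x 𝔱 => (Real.sqrt (2 * Real.exp (-(2 * 𝔱))))⁻¹ • (γ x (origTime T 𝔱) - x₀)

/-- The rescaled endpoint `P̃ⁱ_{x₀,𝔱} = (Pⁱ − x₀)/√(2(T−t(𝔱)))`. -/
def rescPoint (p x₀ : E2) (𝔱 : ℝ) : E2 := (Real.sqrt (2 * Real.exp (-(2 * 𝔱))))⁻¹ • (p - x₀)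

/-- The static Gaussian weight `ρ̃(x) = e^{−|x|²/2}`. -/
def gaussWeight (x : E2) : ℝ := Real.exp (-‖x‖ ^ 2 / 2)

/-- The integral `∫_{𝕋̃_{x₀,𝔱}} ρ̃ dσ` of the Gaussian weight over the rescaled triod. -/
def rescGaussIntegral (γ : Fin 3 → ℝ → ℝ → E2) (x₀ : E2) (T 𝔱 : ℝ) : ℝ :=
  ∑ i : Fin 3, ∫ x in (0:ℝ)..1,
    gaussWeight (rescCurve (γ i) x₀ T x 𝔱) * ‖dX (rescCurve (γ i) x₀ T) x 𝔱‖

/-- The boundary term of the rescaled monotonicity formula at the endpoint `Pⁱ`: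
`⟨P̃ⁱ_{x₀,ξ}, τⁱ(1,t(ξ))⟩ ρ̃(P̃ⁱ_{x₀,ξ})`. -/
def rescBoundaryTerm (γ : Fin 3 → ℝ → ℝ → E2) (P : Fin 3 → E2) (T : ℝ) (x₀ : E2)
    (i : Fin 3) (ξ : ℝ) : ℝ :=
  (inner ℝ (rescPoint (P i) x₀ ξ) (tangent (γ i) 1 (origTime T ξ)) : ℝ) *
    gaussWeight (rescPoint (P i) x₀ ξ)

/-! ### Auxiliary lemmas -/

lemma gauss_integrable : Integrable (fun u : ℝ => Real.exp (-u ^ 2 / 2)) := by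
  have h := integrable_exp_neg_mul_sq (by norm_num : (0:ℝ) < 1/2)
  have e : (fun u : ℝ => Real.exp (-u ^ 2 / 2)) = fun u : ℝ => Real.exp (-(1/2) * u ^ 2) := by
    funext u; congr 1; ring
  rw [e]; exact h

lemma gauss_int_Ioi_zero : ∫ u in Ioi (0:ℝ), Real.exp (-u ^ 2 / 2) = Real.sqrt (π / 2) := by
  have e : (fun u : ℝ => Real.exp (-u ^ 2 / 2)) = fun u : ℝ => Real.exp (-(1/2) * u ^ 2) := by
    funext u; congr 1; ring
  rw [e, integral_gaussian_Ioi]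
  rw [show π / (1/2 : ℝ) = 2 * π by ring, show π / 2 = (2 * π) / (2:ℝ)^2 by ring,
    Real.sqrt_div (by positivity), Real.sqrt_sq (by norm_num)]

lemma tailIntegrable (c 𝔱 : ℝ) (hc : 0 < c) :
    IntegrableOn (fun ξ => Real.exp (-(c * Real.exp ξ) ^ 2 / 2) * (c * Real.exp ξ)) (Ioi 𝔱) := by
  have hk : IntegrableOn
      (fun ξ => Real.exp (2 * ξ) * Real.exp (-(c ^ 2 * Real.exp (2 * ξ)) / 2)) (Ioi 𝔱) := by
    have hderiv : ∀ x ∈ Ici 𝔱, HasDerivAt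
        (fun ξ => -(c ^ 2)⁻¹ * Real.exp (-(c ^ 2 * Real.exp (2 * ξ)) / 2))
        (Real.exp (2 * x) * Real.exp (-(c ^ 2 * Real.exp (2 * x)) / 2)) x := by
      intro x _
      have hA : HasDerivAt (fun ξ : ℝ => 2 * ξ) 2 x := by
        simpa using (hasDerivAt_id x).const_mul 2
      have hB := hA.exp
      have hC := ((hB.const_mul (c ^ 2)).neg).div_const 2
      have hD := hC.exp
      have hG := hD.const_mul (-(c ^ 2)⁻¹)
      simp only [Pi.neg_apply] at hG
      refine hG.congr_deriv ?_
      have : (c:ℝ) ^ 2 ≠ 0 := by positivity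
      linear_combination ((Real.exp (2 * x) * Real.exp (-(c ^ 2 * Real.exp (2 * x)) / 2))) *
        inv_mul_cancel₀ this
    have htend : Tendsto (fun ξ => -(c ^ 2)⁻¹ * Real.exp (-(c ^ 2 * Real.exp (2 * ξ)) / 2))
        atTop (𝓝 (-(c ^ 2)⁻¹ * 0)) := by
      apply Tendsto.const_mul
      apply Real.tendsto_exp_atBot.comp
      have t1 : Tendsto (fun ξ : ℝ => 2 * ξ) atTop atTop :=
        tendsto_id.const_mul_atTop two_pos
      have t2 := Real.tendsto_exp_atTop.comp t1
      have t3 : Tendsto (fun ξ : ℝ => c ^ 2 * Real.exp (2 * ξ)) atTop atTop :=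
        t2.const_mul_atTop (by positivity)
      have t4 : Tendsto (fun ξ : ℝ => -(c ^ 2 * Real.exp (2 * ξ))) atTop atBot :=
        tendsto_neg_atTop_atBot.comp t3
      exact t4.atBot_div_const two_pos
    rw [show (-(c ^ 2)⁻¹ * (0:ℝ)) = 0 by ring] at htend
    exact integrableOn_Ioi_deriv_of_nonneg' hderiv (fun x _ => by positivity) htend
  apply Integrable.mono' (hk.const_mul (c * Real.exp (-𝔱)))
  · refine Continuous.aestronglyMeasurable ?_ |>.restrict
    continuity
  · filter_upwards [ae_restrict_mem measurableSet_Ioi] with ξ hξ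
    have hξ' : 𝔱 < ξ := hξ
    have hsq : (c * Real.exp ξ) ^ 2 = c ^ 2 * Real.exp (2 * ξ) := by
      rw [mul_pow, sq (Real.exp ξ), ← Real.exp_add]
      ring_nf
    rw [Real.norm_eq_abs, abs_of_nonneg (by positivity), hsq]
    have he : Real.exp ξ ≤ Real.exp (-𝔱) * Real.exp (2 * ξ) := by
      rw [← Real.exp_add]
      exact Real.exp_le_exp.2 (by linarith)
    calc Real.exp (-(c ^ 2 * Real.exp (2 * ξ)) / 2) * (c * Real.exp ξ)
        ≤ Real.exp (-(c ^ 2 * Real.exp (2 * ξ)) / 2) *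
            (c * (Real.exp (-𝔱) * Real.exp (2 * ξ))) := by gcongr
      _ = c * Real.exp (-𝔱) * (Real.exp (2 * ξ) *
            Real.exp (-(c ^ 2 * Real.exp (2 * ξ)) / 2)) := by ring

lemma tailEq (c 𝔱 : ℝ) (hc : 0 < c) :
    ∫ ξ in Ioi 𝔱, Real.exp (-(c * Real.exp ξ) ^ 2 / 2) * (c * Real.exp ξ)
      = ∫ u in Ioi (c * Real.exp 𝔱), Real.exp (-u ^ 2 / 2) := by
  have h := integral_comp_mul_deriv_Ioi (f := fun ξ => c * Real.exp ξ)
    (f' := fun ξ => c * Real.exp ξ) (g := fun u => Real.exp (-u ^ 2 / 2)) (a := 𝔱)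
    (by fun_prop)
    (Real.tendsto_exp_atTop.const_mul_atTop hc)
    (fun x _ => ((Real.hasDerivAt_exp x).const_mul c).hasDerivWithinAt)
    (by fun_prop)
    (gauss_integrable.integrableOn)
    (by
      rw [integrableOn_Ici_iff_integrableOn_Ioi]
      exact tailIntegrable c 𝔱 hc)
  simpa using h

lemma gaussTail_tendsto :
    Tendsto (fun b : ℝ => ∫ u in Ioi b, Real.exp (-u ^ 2 / 2)) atTop (𝓝 0) := by
  have hI := gauss_integrable.integrableOn (s := Ioi (0:ℝ))
  have t := intervalIntegral_tendsto_integral_Ioi 0 hI tendsto_id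
  have t2 : Tendsto (fun b : ℝ => (∫ u in Ioi (0:ℝ), Real.exp (-u ^ 2 / 2))
      - ∫ u in (0:ℝ)..b, Real.exp (-u ^ 2 / 2)) atTop (𝓝 0) := by
    have := tendsto_const_nhds (x := ∫ u in Ioi (0:ℝ), Real.exp (-u ^ 2 / 2))
      (f := atTop (α := ℝ)) |>.sub t
    simpa using this
  apply t2.congr'
  filter_upwards [Ici_mem_atTop (0:ℝ)] with b hb
  have hb' : (0:ℝ) ≤ b := hb
  have hsplit : (∫ u in Ioi (0:ℝ), Real.exp (-u ^ 2 / 2))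
      = (∫ u in Ioc (0:ℝ) b, Real.exp (-u ^ 2 / 2)) + ∫ u in Ioi b, Real.exp (-u ^ 2 / 2) := by
    rw [← setIntegral_union (Ioc_disjoint_Ioi le_rfl) measurableSet_Ioi
      (gauss_integrable.integrableOn) (gauss_integrable.integrableOn),
      Ioc_union_Ioi_eq_Ioi hb']
  rw [intervalIntegral.integral_of_le hb']
  linarith [hsplit]

lemma abs_setInt_le {f g : ℝ → ℝ} {s : Set ℝ} (hg : IntegrableOn g s)
    (hle : ∀ x, |f x| ≤ g x) : |∫ x in s, f x| ≤ ∫ x in s, g x := by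
  by_cases hf : IntegrableOn f s
  · refine le_trans ?_ (integral_mono hf.abs hg hle)
    simpa [Real.norm_eq_abs] using norm_integral_le_integral_norm (μ := volume.restrict s) f
  · rw [integral_undef hf, abs_zero]
    exact integral_nonneg fun x => (abs_nonneg (f x)).trans (hle x)

lemma norm_tangent_le (γ : ℝ → ℝ → E2) (x t : ℝ) : ‖tangent γ x t‖ ≤ 1 := by
  unfold tangent
  rcases eq_or_ne (dX γ x t) 0 with h | h
  · simp [h]
  · rw [norm_smul, norm_inv, norm_norm, inv_mul_cancel₀ (norm_ne_zero_iff.2 h)]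

lemma norm_rescPoint (p x₀ : E2) (ξ : ℝ) :
    ‖rescPoint p x₀ ξ‖ = ‖p - x₀‖ / Real.sqrt 2 * Real.exp ξ := by
  unfold rescPoint
  rw [norm_smul, Real.norm_eq_abs]
  have h1 : Real.sqrt (2 * Real.exp (-(2 * ξ))) = Real.sqrt 2 * Real.exp (-ξ) := by
    rw [show Real.exp (-(2 * ξ)) = Real.exp (-ξ) ^ 2 by rw [sq, ← Real.exp_add]; ring_nf,
      Real.sqrt_mul (by norm_num), Real.sqrt_sq (Real.exp_nonneg _)]
  rw [h1, abs_of_nonneg (by positivity), mul_inv, Real.exp_neg, inv_inv]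
  ring

lemma rescBT_abs_le (γ : Fin 3 → ℝ → ℝ → E2) (P : Fin 3 → E2) (T : ℝ) (x₀ : E2)
    (i : Fin 3) (ξ : ℝ) :
    |rescBoundaryTerm γ P T x₀ i ξ| ≤
      Real.exp (-(‖P i - x₀‖ / Real.sqrt 2 * Real.exp ξ) ^ 2 / 2) *
        (‖P i - x₀‖ / Real.sqrt 2 * Real.exp ξ) := by
  have hinner : |(inner ℝ (rescPoint (P i) x₀ ξ) (tangent (γ i) 1 (origTime T ξ)) : ℝ)|
      ≤ ‖P i - x₀‖ / Real.sqrt 2 * Real.exp ξ := by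
    calc |(inner ℝ (rescPoint (P i) x₀ ξ) (tangent (γ i) 1 (origTime T ξ)) : ℝ)|
        ≤ ‖rescPoint (P i) x₀ ξ‖ * ‖tangent (γ i) 1 (origTime T ξ)‖ :=
          abs_real_inner_le_norm _ _
      _ ≤ ‖rescPoint (P i) x₀ ξ‖ * 1 := by gcongr; exact norm_tangent_le _ _ _
      _ = ‖P i - x₀‖ / Real.sqrt 2 * Real.exp ξ := by rw [mul_one, norm_rescPoint]
  unfold rescBoundaryTerm gaussWeight
  rw [abs_mul, abs_of_nonneg (Real.exp_nonneg _), norm_rescPoint, mul_comm]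
  exact mul_le_mul_of_nonneg_left hinner (Real.exp_nonneg _)

/-- Let `𝕋_t` be a triod evolving by curvature on `[0,T)` with fixed
endpoints `P¹,P²,P³`, and fix `x₀ ∈ ℝ²`. With `P̃ⁱ_{x₀,𝔱} = (Pⁱ−x₀)/√(2(T−t(𝔱)))`,
`t(𝔱) = T − e^{−2𝔱}` and `ρ̃(x) = e^{−|x|²/2}`, for every `i` and every `𝔱`,
`|∫_𝔱^∞ ⟨P̃ⁱ_{x₀,ξ}, τⁱ(1,t(ξ))⟩ ρ̃(P̃ⁱ_{x₀,ξ}) dξ| ≤ √(π/2)` (for every `x₀`);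
consequently, for every `x₀` with `x₀ ≠ Pⁱ` for all `i`,
`lim_{𝔱→∞} Σᵢ ∫_𝔱^∞ ⟨P̃ⁱ_{x₀,ξ}, τⁱ(1,t(ξ))⟩ ρ̃(P̃ⁱ_{x₀,ξ}) dξ = 0`. -/

theorem rescaled_boundary_term_estimate
    (Ω : Set E2) (P : Fin 3 → E2) (T : ℝ) (hT : 0 < T)
    (γ : Fin 3 → ℝ → ℝ → E2)
    (hflow : IsTriodFlow Ω P γ (Ico 0 T))
    (x₀ : E2) :
    (∀ i : Fin 3, ∀ 𝔱 : ℝ,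
      |∫ ξ in Ioi 𝔱, rescBoundaryTerm γ P T x₀ i ξ| ≤ Real.sqrt (π / 2)) ∧
    ((∀ i, x₀ ≠ P i) →
      Tendsto (fun 𝔱 => ∑ i : Fin 3, ∫ ξ in Ioi 𝔱, rescBoundaryTerm γ P T x₀ i ξ)
        atTop (𝓝 0)) := by
  have key : ∀ (i : Fin 3) (𝔱 : ℝ), 0 < ‖P i - x₀‖ / Real.sqrt 2 →
      |∫ ξ in Ioi 𝔱, rescBoundaryTerm γ P T x₀ i ξ| ≤
        ∫ u in Ioi (‖P i - x₀‖ / Real.sqrt 2 * Real.exp 𝔱), Real.exp (-u ^ 2 / 2) := by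
    intro i 𝔱 hc
    refine le_trans (abs_setInt_le (tailIntegrable _ 𝔱 hc) (rescBT_abs_le γ P T x₀ i)) ?_
    exact le_of_eq (tailEq _ 𝔱 hc)
  have gaussTail_le : ∀ b : ℝ, 0 ≤ b →
      (∫ u in Ioi b, Real.exp (-u ^ 2 / 2)) ≤ Real.sqrt (π / 2) := by
    intro b hb
    rw [← gauss_int_Ioi_zero]
    refine setIntegral_mono_set gauss_integrable.integrableOn
      (Filter.Eventually.of_forall fun x => (Real.exp_pos _).le) ?_
    exact HasSubset.Subset.eventuallyLE (Ioi_subset_Ioi hb)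
  constructor
  · intro i 𝔱
    rcases eq_or_lt_of_le (by positivity : (0:ℝ) ≤ ‖P i - x₀‖ / Real.sqrt 2) with hc | hc
    · have hz : ∀ ξ, rescBoundaryTerm γ P T x₀ i ξ = 0 := by
        intro ξ
        have h := rescBT_abs_le γ P T x₀ i ξ
        rw [← hc] at h
        simp only [zero_mul, mul_zero] at h
        exact abs_eq_zero.mp (le_antisymm h (abs_nonneg _))
      simp only [hz, integral_zero, abs_zero]
      exact Real.sqrt_nonneg _
    · exact (key i 𝔱 hc).trans (gaussTail_le _ (by positivity))
  · intro h0
    have hi : ∀ i : Fin 3,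
        Tendsto (fun 𝔱 => ∫ ξ in Ioi 𝔱, rescBoundaryTerm γ P T x₀ i ξ) atTop (𝓝 0) := by
      intro i
      have hn : 0 < ‖P i - x₀‖ := norm_pos_iff.mpr (sub_ne_zero.2 (Ne.symm (h0 i)))
      have hc : 0 < ‖P i - x₀‖ / Real.sqrt 2 :=
        div_pos hn (Real.sqrt_pos.2 two_pos)
      refine squeeze_zero_norm (a := fun 𝔱 => ∫ u in Ioi (‖P i - x₀‖ / Real.sqrt 2 * Real.exp 𝔱),
          Real.exp (-u ^ 2 / 2)) (fun 𝔱 => ?_) ?_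
      · simpa [Real.norm_eq_abs] using key i 𝔱 hc
      · exact gaussTail_tendsto.comp (Real.tendsto_exp_atTop.const_mul_atTop hc)
    have := tendsto_finset_sum (Finset.univ : Finset (Fin 3)) (fun i _ => hi i)
    simpa using this
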